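/- Let P be a finite partially ordered set whose height (the maximum cardinality of a chain in P) is h. Then P can be partitioned into h antichains, i.e., there exists a family of h pairwise disjoint nonempty antichains of P whose union is all of P. (Mirsky's theorem; part (a) of the paper's Theorem 3.) -/

import Mathlib

section Aux
variable {P : Type*} [Fintype P] [PartialOrder P]

lemma aux_height_ne_top (x : P) : Order.height x ≠ ⊤ := by
  intro htop
  obtain ⟨p, _, hlen⟩ := Order.height_eq_top_iff.mp htop (Fintype.card P)
  have : Fintype.card (Fin (p.length + 1)) ≤ Fintype.card P :=
    Fintype.card_le_of_injective p p.strictMono.injective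
  simp [hlen] at this

lemma aux_height_coe (x : P) : Order.height x = ((Order.height x).toNat : ℕ∞) :=
  (ENat.coe_toNat (aux_height_ne_top x)).symm

lemma aux_toNat_lt {x y : P} (hxy : x < y) :
    (Order.height x).toNat < (Order.height y).toNat := by
  have hlt : Order.height x < Order.height y :=
    Order.height_strictMono hxy (lt_top_iff_ne_top.mpr (aux_height_ne_top x))
  rw [aux_height_coe x, aux_height_coe y] at hlt
  exact_mod_cast hlt

/-- Any nonempty finite chain `c` contains an element of height at least `c.card - 1`. -/
lemma aux_chain_height (n : ℕ) : ∀ c : Finset P, IsChain (· ≤ ·) (c : Set P) → c.card = n →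
    c.Nonempty → ∃ x ∈ c, n - 1 ≤ (Order.height x).toNat := by
  classical
  induction n with
  | zero =>
    intro c _ hcard hne
    exact absurd hcard (by simpa using hne.card_pos.ne')
  | succ n ih =>
    intro c hc hcard hne
    obtain ⟨x, hx, hmax⟩ : ∃ m ∈ c, ∀ y ∈ c, ¬ m < y := by
      obtain ⟨m, hm⟩ := Finset.exists_maximal hne
      exact ⟨m, hm.1, fun y hy hlt => absurd (hm.2 hy hlt.le) (not_le_of_gt hlt)⟩
    rcases Nat.eq_zero_or_pos n with hn | hn
    · exact ⟨x, hx, by omega⟩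
    · have hcard' : (c.erase x).card = n := by
        rw [Finset.card_erase_of_mem hx, hcard]; omega
      have hne' : (c.erase x).Nonempty := by
        rw [← Finset.card_pos, hcard']; omega
      have hchain' : IsChain (· ≤ ·) ((c.erase x : Finset P) : Set P) :=
        hc.mono (by simp [Finset.coe_subset])
      obtain ⟨y, hy, hyh⟩ := ih _ hchain' hcard' hne'
      have hyx : y < x := by
        have hyc := Finset.mem_of_mem_erase hy
        have hne : y ≠ x := Finset.ne_of_mem_erase hy
        rcases hc hyc hx hne with h1 | h1
        · exact lt_of_le_of_ne h1 hne
        · exact absurd (lt_of_le_of_ne h1 hne.symm) (hmax y hyc)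
      have := aux_toNat_lt hyx
      exact ⟨x, hx, by omega⟩

/-- From an element of height `n` we get a chain Finset of cardinality `n+1`. -/
lemma aux_height_chain (x : P) :
    ∃ c : Finset P, IsChain (· ≤ ·) (c : Set P) ∧ c.card = (Order.height x).toNat + 1 := by
  classical
  obtain ⟨p, hlast, hlen⟩ := Order.exists_series_of_height_eq_coe x (aux_height_coe x)
  refine ⟨Finset.image p Finset.univ, ?_, ?_⟩
  · intro a ha b hb hne
    simp only [Finset.coe_image, Set.mem_image] at ha hb
    obtain ⟨i, -, rfl⟩ := ha
    obtain ⟨j, -, rfl⟩ := hb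
    rcases le_total i j with hij | hij
    · exact Or.inl (p.monotone hij)
    · exact Or.inr (p.monotone hij)
  · rw [Finset.card_image_of_injective _ p.strictMono.injective, Finset.card_univ]
    simp [hlen]

end Aux

/-- Mirsky's theorem: a finite poset of height `h` (the maximum cardinality of a chain)
can be partitioned into `h` pairwise disjoint nonempty antichains. -/
theorem mirsky_partition_into_antichains
    {P : Type*} [Fintype P] [PartialOrder P] (h : ℕ)
    (hh : IsGreatest
      {n : ℕ | ∃ c : Finset P, IsChain (· ≤ ·) (c : Set P) ∧ c.card = n} h) :
    ∃ A : Fin h → Finset P,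
      (∀ i, (A i).Nonempty) ∧
      (∀ i, IsAntichain (· ≤ ·) ((A i : Set P))) ∧
      (∀ i j, i ≠ j → Disjoint (A i) (A j)) ∧
      (∀ x : P, ∃ i, x ∈ A i) := by
  classical
  -- every element has height < h
  have hbound : ∀ x : P, (Order.height x).toNat < h := by
    intro x
    obtain ⟨c, hc, hcard⟩ := aux_height_chain x
    have := hh.2 ⟨c, hc, hcard⟩
    omega
  -- descend heights one step at a time
  have hdesc : ∀ x : P, ∀ k : ℕ, (Order.height x).toNat = k + 1 →
      ∃ y : P, (Order.height y).toNat = k := by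
    intro x k hk
    have hx : Order.height x = ((k : ℕ∞) + 1) := by
      rw [aux_height_coe x, hk]; push_cast; ring
    obtain ⟨-, ⟨y, -, hy⟩, -⟩ := Order.height_eq_coe_add_one_iff.mp hx
    exact ⟨y, by simp [hy]⟩
  rcases Nat.eq_zero_or_pos h with hzero | hpos
  · subst hzero
    refine ⟨fun i => i.elim0, fun i => i.elim0, fun i => i.elim0, fun i => i.elim0, ?_⟩
    intro x
    exact absurd (hbound x) (by omega)
  -- there is an element of height h - 1
  obtain ⟨cmax, hcmax, hcmaxcard⟩ := hh.1
  have hcne : cmax.Nonempty := by rw [← Finset.card_pos, hcmaxcard]; omega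
  obtain ⟨t, -, ht⟩ := aux_chain_height h cmax hcmax hcmaxcard hcne
  have htop : (Order.height t).toNat + 1 = h := by have := hbound t; omega
  -- hence an element of every height below h
  have hall' : ∀ d : ℕ, d < h → ∃ y : P, (Order.height y).toNat + d + 1 = h := by
    intro d
    induction d with
    | zero => exact fun _ => ⟨t, by omega⟩
    | succ d ihd =>
      intro hd
      obtain ⟨y, hy⟩ := ihd (by omega)
      have h1 : (Order.height y).toNat = ((Order.height y).toNat - 1) + 1 := by omega
      obtain ⟨z, hz⟩ := hdesc y _ h1
      exact ⟨z, by omega⟩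
  have hall : ∀ i : ℕ, i < h → ∃ y : P, (Order.height y).toNat = i := by
    intro i hi
    obtain ⟨y, hy⟩ := hall' (h - 1 - i) (by omega)
    exact ⟨y, by omega⟩
  refine ⟨fun i => Finset.univ.filter (fun x => (Order.height x).toNat = i), ?_, ?_, ?_, ?_⟩
  · intro i
    obtain ⟨y, hy⟩ := hall i i.2
    exact ⟨y, by simp [hy]⟩
  · intro i x hx y hy hne hle
    simp only [Finset.coe_filter, Set.mem_setOf_eq, Finset.mem_univ, true_and] at hx hy
    have := aux_toNat_lt (lt_of_le_of_ne hle hne)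
    omega
  · intro i j hij
    refine Finset.disjoint_left.mpr ?_
    intro x hx hx'
    simp only [Finset.mem_filter] at hx hx'
    exact hij (Fin.ext (by omega))
  · intro x
    exact ⟨⟨_, hbound x⟩, by simp⟩
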